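/- Let Π be a joint probability distribution of (v_1, v_2, y) ∈ [0,1] × [0,1] × {0,1}, let J_1 be the marginal distribution of (v_1, y) and J_2 the marginal distribution of (v_2, y). Then |ℓ1-ATB(J_1) − ℓ1-ATB(J_2)| ≤ 3 · E_Π[|v_1 − v_2|] and |ATB(J_1) − ATB(J_2)| ≤ 6 · E_Π[|v_1 − v_2|]. -/

import Mathlib

open MeasureTheory Finset
open scoped ENNReal

noncomputable section

/-- Bias of the lower bin `{v < q}` under a distribution `mu` of prediction-state pairs. -/
def binNeg (mu : Measure (ℝ × ℝ)) (q : ℝ) : ℝ :=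
  ∫ x, (x.1 - x.2) * (if x.1 < q then 1 else 0) ∂mu

/-- Bias of the upper bin `{v ≥ q}` under a distribution `mu` of prediction-state pairs. -/
def binPos (mu : Measure (ℝ × ℝ)) (q : ℝ) : ℝ :=
  ∫ x, (x.1 - x.2) * (if q ≤ x.1 then 1 else 0) ∂mu

/-- Averaged two-bin calibration error of a prediction-state distribution. -/
def ATB (mu : Measure (ℝ × ℝ)) : ℝ :=
  ∫ q in (0:ℝ)..1, ((binNeg mu q)^2 + (binPos mu q)^2)

/-- ℓ1 variant of the averaged two-bin calibration error of a distribution. -/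
def l1ATB (mu : Measure (ℝ × ℝ)) : ℝ :=
  ∫ q in (0:ℝ)..1, (|binNeg mu q| + |binPos mu q|)

/-! ### Auxiliary definitions and lemmas -/

/-- lower-bin integrand for the first marginal -/
def An (q : ℝ) (x : ℝ × ℝ × ℝ) : ℝ := (x.1 - x.2.2) * (if x.1 < q then 1 else 0)
/-- lower-bin integrand for the second marginal -/
def Bn (q : ℝ) (x : ℝ × ℝ × ℝ) : ℝ := (x.2.1 - x.2.2) * (if x.2.1 < q then 1 else 0)
/-- upper-bin integrand for the first marginal -/
def Ap (q : ℝ) (x : ℝ × ℝ × ℝ) : ℝ := (x.1 - x.2.2) * (if q ≤ x.1 then 1 else 0)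
/-- upper-bin integrand for the second marginal -/
def Bp (q : ℝ) (x : ℝ × ℝ × ℝ) : ℝ := (x.2.1 - x.2.2) * (if q ≤ x.2.1 then 1 else 0)
/-- indicator discrepancy -/
def Ind (q : ℝ) (x : ℝ × ℝ × ℝ) : ℝ :=
  |(if x.1 < q then (1:ℝ) else 0) - (if x.2.1 < q then 1 else 0)|
/-- Fubini bound integrand -/
def Fb (q : ℝ) (x : ℝ × ℝ × ℝ) : ℝ := |x.1 - x.2.1| + 2 * Ind q x

lemma pointwise_bound (a b y q : ℝ) (ha : a ∈ Set.Icc (0:ℝ) 1) (hb : b ∈ Set.Icc (0:ℝ) 1)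
    (hy : y = 0 ∨ y = 1) :
    |(a - y) * (if a < q then (1:ℝ) else 0) - (b - y) * (if b < q then 1 else 0)|
      + |(a - y) * (if q ≤ a then (1:ℝ) else 0) - (b - y) * (if q ≤ b then 1 else 0)|
      ≤ |a - b| + 2 * |(if a < q then (1:ℝ) else 0) - (if b < q then 1 else 0)| := by
  obtain ⟨ha0, ha1⟩ := ha; obtain ⟨hb0, hb1⟩ := hb
  have hay : |a - y| ≤ 1 := by
    rcases hy with h|h <;> rw [h, abs_le] <;> constructor <;> linarith
  have hby : |b - y| ≤ 1 := by
    rcases hy with h|h <;> rw [h, abs_le] <;> constructor <;> linarith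
  have hab := abs_nonneg (a - b)
  rcases lt_or_ge a q with h1 | h1 <;> rcases lt_or_ge b q with h2 | h2
  · simp only [if_pos h1, if_pos h2, if_neg (not_le.mpr h1), if_neg (not_le.mpr h2),
      mul_one, mul_zero, sub_zero, sub_self, abs_zero, sub_sub_sub_cancel_right]
    linarith
  · simp only [if_pos h1, if_neg (not_lt.mpr h2), if_neg (not_le.mpr h1), if_pos h2,
      mul_one, mul_zero, sub_zero, zero_sub, abs_neg]
    rw [abs_one]; linarith
  · simp only [if_neg (not_lt.mpr h1), if_pos h2, if_pos h1, if_neg (not_le.mpr h2),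
      mul_one, mul_zero, zero_sub, abs_neg, sub_zero]
    rw [abs_one]; linarith
  · simp only [if_neg (not_lt.mpr h1), if_neg (not_lt.mpr h2), if_pos h1, if_pos h2,
      mul_one, mul_zero, sub_self, abs_zero, zero_add, sub_sub_sub_cancel_right]
    linarith

lemma ind_integral_of_le (a b : ℝ) (h0 : 0 ≤ a) (hab : a ≤ b) (hb1 : b ≤ 1) :
    ∫ q in Set.Ioc (0:ℝ) 1, |(if a < q then (1:ℝ) else 0) - (if b < q then 1 else 0)|
      ≤ |a - b| := by
  have heq : ∀ q : ℝ, |(if a < q then (1:ℝ) else 0) - (if b < q then 1 else 0)|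
      = (Set.Ioc a b).indicator (fun _ => (1:ℝ)) q := by
    intro q
    rcases lt_or_ge a q with h1|h1 <;> rcases lt_or_ge b q with h2|h2 <;>
      simp [Set.indicator_apply, Set.mem_Ioc, h1, h2, not_lt.mpr, not_le.mpr] <;>
      linarith
  simp_rw [heq]
  rw [setIntegral_indicator measurableSet_Ioc,
    Set.inter_eq_self_of_subset_right (Set.Ioc_subset_Ioc h0 hb1),
    setIntegral_const, Real.volume_real_Ioc_of_le hab, smul_eq_mul, mul_one]
  rw [abs_sub_comm, abs_of_nonneg (by linarith)]

lemma ind_integral (a b : ℝ) (ha : a ∈ Set.Icc (0:ℝ) 1) (hb : b ∈ Set.Icc (0:ℝ) 1) :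
    ∫ q in Set.Ioc (0:ℝ) 1, |(if a < q then (1:ℝ) else 0) - (if b < q then 1 else 0)|
      ≤ |a - b| := by
  rcases le_total a b with h | h
  · exact ind_integral_of_le a b ha.1 h hb.2
  · have := ind_integral_of_le b a hb.1 h ha.2
    simp_rw [abs_sub_comm] at this ⊢
    simpa [abs_sub_comm] using this

lemma integrable_of_bound {α : Type*} [MeasurableSpace α] {μ : Measure α} [IsFiniteMeasure μ]
    {f : α → ℝ} (c : ℝ) (hf : AEStronglyMeasurable f μ) (h : ∀ᵐ x ∂μ, |f x| ≤ c) :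
    Integrable f μ :=
  Integrable.mono' (integrable_const c) hf (by simpa [Real.norm_eq_abs] using h)

lemma Ind_le_one (q : ℝ) (x : ℝ × ℝ × ℝ) : Ind q x ≤ 1 := by
  unfold Ind; split_ifs <;> norm_num

lemma Ind_nonneg (q : ℝ) (x : ℝ × ℝ × ℝ) : 0 ≤ Ind q x := abs_nonneg _

lemma meas_An_joint : Measurable fun p : ℝ × (ℝ × ℝ × ℝ) => An p.1 p.2 := by
  unfold An
  exact (measurable_snd.fst.sub measurable_snd.snd.snd).mul
    (Measurable.ite (measurableSet_lt measurable_snd.fst measurable_fst)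
      measurable_const measurable_const)

lemma meas_Bn_joint : Measurable fun p : ℝ × (ℝ × ℝ × ℝ) => Bn p.1 p.2 := by
  unfold Bn
  exact (measurable_snd.snd.fst.sub measurable_snd.snd.snd).mul
    (Measurable.ite (measurableSet_lt measurable_snd.snd.fst measurable_fst)
      measurable_const measurable_const)

lemma meas_Ap_joint : Measurable fun p : ℝ × (ℝ × ℝ × ℝ) => Ap p.1 p.2 := by
  unfold Ap
  exact (measurable_snd.fst.sub measurable_snd.snd.snd).mul
    (Measurable.ite (measurableSet_le measurable_fst measurable_snd.fst)
      measurable_const measurable_const)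

lemma meas_Bp_joint : Measurable fun p : ℝ × (ℝ × ℝ × ℝ) => Bp p.1 p.2 := by
  unfold Bp
  exact (measurable_snd.snd.fst.sub measurable_snd.snd.snd).mul
    (Measurable.ite (measurableSet_le measurable_fst measurable_snd.snd.fst)
      measurable_const measurable_const)

lemma meas_Ind_joint : Measurable fun p : ℝ × (ℝ × ℝ × ℝ) => Ind p.1 p.2 := by
  unfold Ind
  exact ((Measurable.ite (measurableSet_lt measurable_snd.fst measurable_fst)
      measurable_const measurable_const).sub
    (Measurable.ite (measurableSet_lt measurable_snd.snd.fst measurable_fst)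
      measurable_const measurable_const)).abs

lemma meas_Fb_joint : Measurable (Function.uncurry Fb) := by
  have : Function.uncurry Fb = fun p : ℝ × (ℝ × ℝ × ℝ) =>
      |p.2.1 - p.2.2.1| + 2 * Ind p.1 p.2 := rfl
  rw [this]
  exact ((measurable_snd.fst.sub measurable_snd.snd.fst).abs).add
    (meas_Ind_joint.const_mul 2)

lemma abs_vy_le (v y : ℝ) (hv : v ∈ Set.Icc (0:ℝ) 1) (hy : y = 0 ∨ y = 1) : |v - y| ≤ 1 := by
  obtain ⟨h0, h1⟩ := hv
  rcases hy with h|h <;> rw [h, abs_le] <;> constructor <;> linarith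

lemma sq_diff_bound (a c : ℝ) (ha : |a| ≤ 1) (hc : |c| ≤ 1) : |a^2 - c^2| ≤ 2 * |a - c| := by
  have h : a^2 - c^2 = (a - c) * (a + c) := by ring
  rw [h, abs_mul]
  have h2 : |a + c| ≤ 2 := (abs_add_le a c).trans (by linarith)
  nlinarith [abs_nonneg (a - c)]

set_option maxHeartbeats 1000000 in
/-- Continuity of ATB and ℓ1-ATB -/
theorem atb_continuity (P : Measure (ℝ × ℝ × ℝ)) [IsProbabilityMeasure P]
    (hsupp : ∀ᵐ x ∂P, x.1 ∈ Set.Icc (0:ℝ) 1 ∧ x.2.1 ∈ Set.Icc (0:ℝ) 1 ∧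
      (x.2.2 = 0 ∨ x.2.2 = 1)) :
    |l1ATB (P.map (fun x => (x.1, x.2.2))) - l1ATB (P.map (fun x => (x.2.1, x.2.2)))|
        ≤ 3 * ∫ x, |x.1 - x.2.1| ∂P ∧
    |ATB (P.map (fun x => (x.1, x.2.2))) - ATB (P.map (fun x => (x.2.1, x.2.2)))|
        ≤ 6 * ∫ x, |x.1 - x.2.1| ∂P := by
  classical
  set μ1 := P.map (fun x : ℝ × ℝ × ℝ => (x.1, x.2.2)) with hμ1def
  set μ2 := P.map (fun x : ℝ × ℝ × ℝ => (x.2.1, x.2.2)) with hμ2def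
  set Δ := ∫ x, |x.1 - x.2.1| ∂P with hΔdef
  -- rewriting the bin biases as integrals over P
  have hm1 : Measurable fun x : ℝ × ℝ × ℝ => (x.1, x.2.2) :=
    measurable_fst.prodMk measurable_snd.snd
  have hm2 : Measurable fun x : ℝ × ℝ × ℝ => (x.2.1, x.2.2) :=
    (measurable_fst.comp measurable_snd).prodMk measurable_snd.snd
  have hbn1 : ∀ q, binNeg μ1 q = ∫ x, An q x ∂P := by
    intro q
    have hgn : Measurable fun p : ℝ × ℝ => (p.1 - p.2) * (if p.1 < q then (1:ℝ) else 0) :=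
      (measurable_fst.sub measurable_snd).mul
        (Measurable.ite (measurableSet_lt measurable_fst measurable_const)
          measurable_const measurable_const)
    rw [binNeg, hμ1def, integral_map hm1.aemeasurable hgn.aestronglyMeasurable]; rfl
  have hbn2 : ∀ q, binNeg μ2 q = ∫ x, Bn q x ∂P := by
    intro q
    have hgn : Measurable fun p : ℝ × ℝ => (p.1 - p.2) * (if p.1 < q then (1:ℝ) else 0) :=
      (measurable_fst.sub measurable_snd).mul
        (Measurable.ite (measurableSet_lt measurable_fst measurable_const)
          measurable_const measurable_const)
    rw [binNeg, hμ2def, integral_map hm2.aemeasurable hgn.aestronglyMeasurable]; rfl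
  have hbp1 : ∀ q, binPos μ1 q = ∫ x, Ap q x ∂P := by
    intro q
    have hgp : Measurable fun p : ℝ × ℝ => (p.1 - p.2) * (if q ≤ p.1 then (1:ℝ) else 0) :=
      (measurable_fst.sub measurable_snd).mul
        (Measurable.ite (measurableSet_le measurable_const measurable_fst)
          measurable_const measurable_const)
    rw [binPos, hμ1def, integral_map hm1.aemeasurable hgp.aestronglyMeasurable]; rfl
  have hbp2 : ∀ q, binPos μ2 q = ∫ x, Bp q x ∂P := by
    intro q
    have hgp : Measurable fun p : ℝ × ℝ => (p.1 - p.2) * (if q ≤ p.1 then (1:ℝ) else 0) :=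
      (measurable_fst.sub measurable_snd).mul
        (Measurable.ite (measurableSet_le measurable_const measurable_fst)
          measurable_const measurable_const)
    rw [binPos, hμ2def, integral_map hm2.aemeasurable hgp.aestronglyMeasurable]; rfl
  -- integrability of the four integrands and related functions over P
  have hiAn : ∀ q, Integrable (An q) P := by
    intro q
    refine integrable_of_bound 1 ((meas_An_joint.comp (measurable_const.prodMk
      measurable_id)).aestronglyMeasurable) ?_
    filter_upwards [hsupp] with x hx
    have h1 := abs_vy_le x.1 x.2.2 hx.1 hx.2.2
    unfold An; rw [abs_mul]
    have h2 : |(if x.1 < q then (1:ℝ) else 0)| ≤ 1 := by split_ifs <;> norm_num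
    nlinarith [abs_nonneg (x.1 - x.2.2), abs_nonneg (if x.1 < q then (1:ℝ) else 0)]
  have hiBn : ∀ q, Integrable (Bn q) P := by
    intro q
    refine integrable_of_bound 1 ((meas_Bn_joint.comp (measurable_const.prodMk
      measurable_id)).aestronglyMeasurable) ?_
    filter_upwards [hsupp] with x hx
    have h1 := abs_vy_le x.2.1 x.2.2 hx.2.1 hx.2.2
    unfold Bn; rw [abs_mul]
    have h2 : |(if x.2.1 < q then (1:ℝ) else 0)| ≤ 1 := by split_ifs <;> norm_num
    nlinarith [abs_nonneg (x.2.1 - x.2.2), abs_nonneg (if x.2.1 < q then (1:ℝ) else 0)]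
  have hiAp : ∀ q, Integrable (Ap q) P := by
    intro q
    refine integrable_of_bound 1 ((meas_Ap_joint.comp (measurable_const.prodMk
      measurable_id)).aestronglyMeasurable) ?_
    filter_upwards [hsupp] with x hx
    have h1 := abs_vy_le x.1 x.2.2 hx.1 hx.2.2
    unfold Ap; rw [abs_mul]
    have h2 : |(if q ≤ x.1 then (1:ℝ) else 0)| ≤ 1 := by split_ifs <;> norm_num
    nlinarith [abs_nonneg (x.1 - x.2.2), abs_nonneg (if q ≤ x.1 then (1:ℝ) else 0)]
  have hiBp : ∀ q, Integrable (Bp q) P := by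
    intro q
    refine integrable_of_bound 1 ((meas_Bp_joint.comp (measurable_const.prodMk
      measurable_id)).aestronglyMeasurable) ?_
    filter_upwards [hsupp] with x hx
    have h1 := abs_vy_le x.2.1 x.2.2 hx.2.1 hx.2.2
    unfold Bp; rw [abs_mul]
    have h2 : |(if q ≤ x.2.1 then (1:ℝ) else 0)| ≤ 1 := by split_ifs <;> norm_num
    nlinarith [abs_nonneg (x.2.1 - x.2.2), abs_nonneg (if q ≤ x.2.1 then (1:ℝ) else 0)]
  have hiInd : ∀ q, Integrable (Ind q) P := by
    intro q
    refine integrable_of_bound 1 ((meas_Ind_joint.comp (measurable_const.prodMk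
      measurable_id)).aestronglyMeasurable) ?_
    exact Filter.Eventually.of_forall fun x => by
      rw [abs_of_nonneg (Ind_nonneg q x)]; exact Ind_le_one q x
  have hivv : Integrable (fun x : ℝ × ℝ × ℝ => |x.1 - x.2.1|) P := by
    refine integrable_of_bound 2 ((measurable_fst.sub measurable_snd.fst).abs.aestronglyMeasurable) ?_
    filter_upwards [hsupp] with x hx
    obtain ⟨⟨h1, h2⟩, ⟨h3, h4⟩, _⟩ := hx
    rw [abs_abs, abs_le]; constructor <;> linarith
  have hiFb : ∀ q, Integrable (Fb q) P :=
    fun q => hivv.add ((hiInd q).const_mul 2)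
  -- the key q-wise bound
  have hkey : ∀ q, |binNeg μ1 q - binNeg μ2 q| + |binPos μ1 q - binPos μ2 q|
      ≤ ∫ x, Fb q x ∂P := by
    intro q
    rw [hbn1 q, hbn2 q, hbp1 q, hbp2 q, ← integral_sub (hiAn q) (hiBn q),
      ← integral_sub (hiAp q) (hiBp q)]
    have e1 : |∫ x, (An q x - Bn q x) ∂P| ≤ ∫ x, |An q x - Bn q x| ∂P := by
      simpa [Real.norm_eq_abs] using
        norm_integral_le_integral_norm (μ := P) (fun x => An q x - Bn q x)
    have e2 : |∫ x, (Ap q x - Bp q x) ∂P| ≤ ∫ x, |Ap q x - Bp q x| ∂P := by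
      simpa [Real.norm_eq_abs] using
        norm_integral_le_integral_norm (μ := P) (fun x => Ap q x - Bp q x)
    have e3 : ∫ x, |An q x - Bn q x| ∂P + ∫ x, |Ap q x - Bp q x| ∂P
        = ∫ x, (|An q x - Bn q x| + |Ap q x - Bp q x|) ∂P :=
      (integral_add ((hiAn q).sub (hiBn q)).abs ((hiAp q).sub (hiBp q)).abs).symm
    have e4 : ∫ x, (|An q x - Bn q x| + |Ap q x - Bp q x|) ∂P ≤ ∫ x, Fb q x ∂P := by
      refine integral_mono_ae (((hiAn q).sub (hiBn q)).abs.add ((hiAp q).sub (hiBp q)).abs)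
        (hiFb q) ?_
      filter_upwards [hsupp] with x hx
      exact pointwise_bound x.1 x.2.1 x.2.2 q hx.1 hx.2.1 hx.2.2
    linarith
  -- Fubini setup
  haveI hfin : IsFiniteMeasure (volume.restrict (Set.Ioc (0:ℝ) 1)) :=
    ⟨by rw [Measure.restrict_apply_univ, Real.volume_Ioc]; exact ENNReal.ofReal_lt_top⟩
  have hmass : (volume.restrict (Set.Ioc (0:ℝ) 1)) Set.univ = 1 := by
    rw [Measure.restrict_apply_univ, Real.volume_Ioc]; norm_num
  have hmap : ((volume.restrict (Set.Ioc (0:ℝ) 1)).prod P).map Prod.snd = P := by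
    rw [Measure.map_snd_prod, hmass, one_smul]
  have hsupp2 : ∀ᵐ p ∂((volume.restrict (Set.Ioc (0:ℝ) 1)).prod P),
      p.2.1 ∈ Set.Icc (0:ℝ) 1 ∧ p.2.2.1 ∈ Set.Icc (0:ℝ) 1 ∧ (p.2.2.2 = 0 ∨ p.2.2.2 = 1) := by
    have h' : ∀ᵐ y ∂(((volume.restrict (Set.Ioc (0:ℝ) 1)).prod P).map Prod.snd),
        y.1 ∈ Set.Icc (0:ℝ) 1 ∧ y.2.1 ∈ Set.Icc (0:ℝ) 1 ∧ (y.2.2 = 0 ∨ y.2.2 = 1) := by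
      rwa [hmap]
    exact ae_of_ae_map (measurable_snd (α := ℝ) (β := ℝ × ℝ × ℝ)).aemeasurable h'
  have hFint : Integrable (Function.uncurry Fb)
      ((volume.restrict (Set.Ioc (0:ℝ) 1)).prod P) := by
    refine integrable_of_bound 4 meas_Fb_joint.aestronglyMeasurable ?_
    filter_upwards [hsupp2] with p hp
    obtain ⟨⟨h1, h2⟩, ⟨h3, h4⟩, _⟩ := hp
    have hv : |p.2.1 - p.2.2.1| ≤ 2 := by rw [abs_le]; constructor <;> linarith
    have hind := Ind_le_one p.1 p.2
    have hind0 := Ind_nonneg p.1 p.2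
    have : Function.uncurry Fb p = |p.2.1 - p.2.2.1| + 2 * Ind p.1 p.2 := rfl
    rw [this, abs_of_nonneg (by positivity)]
    linarith
  have hswap : ∫ q in Set.Ioc (0:ℝ) 1, ∫ x, Fb q x ∂P
      = ∫ x, (∫ q in Set.Ioc (0:ℝ) 1, Fb q x) ∂P := integral_integral_swap hFint
  -- inner bound
  have hinner : ∀ᵐ x ∂P, (∫ q in Set.Ioc (0:ℝ) 1, Fb q x) ≤ 3 * |x.1 - x.2.1| := by
    filter_upwards [hsupp] with x hx
    have hIq : Integrable (fun q => Ind q x) (volume.restrict (Set.Ioc (0:ℝ) 1)) := by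
      refine integrable_of_bound 1 ((meas_Ind_joint.comp
        (measurable_id.prodMk measurable_const)).aestronglyMeasurable) ?_
      exact Filter.Eventually.of_forall fun q => by
        rw [abs_of_nonneg (Ind_nonneg q x)]; exact Ind_le_one q x
    have e1 : ∫ q in Set.Ioc (0:ℝ) 1, Fb q x
        = (∫ q in Set.Ioc (0:ℝ) 1, |x.1 - x.2.1|)
          + ∫ q in Set.Ioc (0:ℝ) 1, 2 * Ind q x :=
      integral_add (integrable_const _) (hIq.const_mul 2)
    have e2 : ∫ q in Set.Ioc (0:ℝ) 1, |x.1 - x.2.1| = |x.1 - x.2.1| := by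
      simp [Real.volume_Ioc]
    have e3 : ∫ q in Set.Ioc (0:ℝ) 1, 2 * Ind q x = 2 * ∫ q in Set.Ioc (0:ℝ) 1, Ind q x :=
      integral_const_mul 2 _
    have e4 : ∫ q in Set.Ioc (0:ℝ) 1, Ind q x ≤ |x.1 - x.2.1| :=
      ind_integral x.1 x.2.1 hx.1 hx.2.1
    rw [e1, e2, e3]; linarith
  have hΦint : Integrable (fun x => ∫ q in Set.Ioc (0:ℝ) 1, Fb q x) P :=
    hFint.integral_prod_right
  have h3vv : Integrable (fun x : ℝ × ℝ × ℝ => 3 * |x.1 - x.2.1|) P := hivv.const_mul 3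
  have core : ∫ q in Set.Ioc (0:ℝ) 1, (∫ x, Fb q x ∂P) ≤ 3 * Δ := by
    rw [hswap]
    calc ∫ x, (∫ q in Set.Ioc (0:ℝ) 1, Fb q x) ∂P ≤ ∫ x, 3 * |x.1 - x.2.1| ∂P :=
          integral_mono_ae hΦint h3vv hinner
      _ = 3 * Δ := by rw [hΔdef]; exact integral_const_mul 3 _
  -- integrability over q of everything in sight
  have hsm_bn1 : StronglyMeasurable (binNeg μ1) := by
    have : binNeg μ1 = fun q => ∫ x, An q x ∂P := funext hbn1
    rw [this]
    exact meas_An_joint.stronglyMeasurable.integral_prod_right'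
  have hsm_bn2 : StronglyMeasurable (binNeg μ2) := by
    have : binNeg μ2 = fun q => ∫ x, Bn q x ∂P := funext hbn2
    rw [this]
    exact meas_Bn_joint.stronglyMeasurable.integral_prod_right'
  have hsm_bp1 : StronglyMeasurable (binPos μ1) := by
    have : binPos μ1 = fun q => ∫ x, Ap q x ∂P := funext hbp1
    rw [this]
    exact meas_Ap_joint.stronglyMeasurable.integral_prod_right'
  have hsm_bp2 : StronglyMeasurable (binPos μ2) := by
    have : binPos μ2 = fun q => ∫ x, Bp q x ∂P := funext hbp2
    rw [this]
    exact meas_Bp_joint.stronglyMeasurable.integral_prod_right'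
  have hone : ∫ (_ : ℝ × ℝ × ℝ), (1:ℝ) ∂P = 1 := by simp
  have hbnd : ∀ (f : ℝ × ℝ × ℝ → ℝ), Integrable f P → (∀ᵐ x ∂P, |f x| ≤ 1) →
      ∀ c : ℝ, c = ∫ x, f x ∂P → |c| ≤ 1 := by
    intro f hf hb c hc
    rw [hc]
    calc |∫ x, f x ∂P| ≤ ∫ x, |f x| ∂P := by
          simpa [Real.norm_eq_abs] using norm_integral_le_integral_norm (μ := P) f
      _ ≤ ∫ (_ : ℝ × ℝ × ℝ), (1:ℝ) ∂P := integral_mono_ae hf.abs (integrable_const 1) hb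
      _ = 1 := hone
  have habs_An : ∀ q, ∀ᵐ x ∂P, |An q x| ≤ 1 := by
    intro q
    filter_upwards [hsupp] with x hx
    have h1 := abs_vy_le x.1 x.2.2 hx.1 hx.2.2
    unfold An; rw [abs_mul]
    have h2 : |(if x.1 < q then (1:ℝ) else 0)| ≤ 1 := by split_ifs <;> norm_num
    nlinarith [abs_nonneg (x.1 - x.2.2), abs_nonneg (if x.1 < q then (1:ℝ) else 0)]
  have habs_Bn : ∀ q, ∀ᵐ x ∂P, |Bn q x| ≤ 1 := by
    intro q
    filter_upwards [hsupp] with x hx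
    have h1 := abs_vy_le x.2.1 x.2.2 hx.2.1 hx.2.2
    unfold Bn; rw [abs_mul]
    have h2 : |(if x.2.1 < q then (1:ℝ) else 0)| ≤ 1 := by split_ifs <;> norm_num
    nlinarith [abs_nonneg (x.2.1 - x.2.2), abs_nonneg (if x.2.1 < q then (1:ℝ) else 0)]
  have habs_Ap : ∀ q, ∀ᵐ x ∂P, |Ap q x| ≤ 1 := by
    intro q
    filter_upwards [hsupp] with x hx
    have h1 := abs_vy_le x.1 x.2.2 hx.1 hx.2.2
    unfold Ap; rw [abs_mul]
    have h2 : |(if q ≤ x.1 then (1:ℝ) else 0)| ≤ 1 := by split_ifs <;> norm_num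
    nlinarith [abs_nonneg (x.1 - x.2.2), abs_nonneg (if q ≤ x.1 then (1:ℝ) else 0)]
  have habs_Bp : ∀ q, ∀ᵐ x ∂P, |Bp q x| ≤ 1 := by
    intro q
    filter_upwards [hsupp] with x hx
    have h1 := abs_vy_le x.2.1 x.2.2 hx.2.1 hx.2.2
    unfold Bp; rw [abs_mul]
    have h2 : |(if q ≤ x.2.1 then (1:ℝ) else 0)| ≤ 1 := by split_ifs <;> norm_num
    nlinarith [abs_nonneg (x.2.1 - x.2.2), abs_nonneg (if q ≤ x.2.1 then (1:ℝ) else 0)]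
  have hb_bn1 : ∀ q, |binNeg μ1 q| ≤ 1 := fun q =>
    hbnd (An q) (hiAn q) (habs_An q) _ (hbn1 q)
  have hb_bn2 : ∀ q, |binNeg μ2 q| ≤ 1 := fun q =>
    hbnd (Bn q) (hiBn q) (habs_Bn q) _ (hbn2 q)
  have hb_bp1 : ∀ q, |binPos μ1 q| ≤ 1 := fun q =>
    hbnd (Ap q) (hiAp q) (habs_Ap q) _ (hbp1 q)
  have hb_bp2 : ∀ q, |binPos μ2 q| ≤ 1 := fun q =>
    hbnd (Bp q) (hiBp q) (habs_Bp q) _ (hbp2 q)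
  -- integrable q-functions on Ioc 0 1
  have hΦq : Integrable (fun q => ∫ x, Fb q x ∂P) (volume.restrict (Set.Ioc (0:ℝ) 1)) :=
    hFint.integral_prod_left
  have hIbq : Integrable (fun q => |binNeg μ1 q - binNeg μ2 q| + |binPos μ1 q - binPos μ2 q|)
      (volume.restrict (Set.Ioc (0:ℝ) 1)) := by
    refine integrable_of_bound 4
      (((hsm_bn1.measurable.sub hsm_bn2.measurable).abs.add
        (hsm_bp1.measurable.sub hsm_bp2.measurable).abs).aestronglyMeasurable) ?_
    refine Filter.Eventually.of_forall fun q => ?_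
    have h1 := hb_bn1 q; have h2 := hb_bn2 q; have h3 := hb_bp1 q; have h4 := hb_bp2 q
    have e1 : |binNeg μ1 q - binNeg μ2 q| ≤ 2 := (abs_sub _ _).trans (by linarith)
    have e2 : |binPos μ1 q - binPos μ2 q| ≤ 2 := (abs_sub _ _).trans (by linarith)
    rw [abs_of_nonneg (by positivity)]
    linarith
  have core2 : ∫ q in Set.Ioc (0:ℝ) 1,
      (|binNeg μ1 q - binNeg μ2 q| + |binPos μ1 q - binPos μ2 q|) ≤ 3 * Δ :=
    le_trans (integral_mono_ae hIbq hΦq (Filter.Eventually.of_forall hkey)) core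
  -- ℓ1 part
  have hs1 : Integrable (fun q => |binNeg μ1 q| + |binPos μ1 q|)
      (volume.restrict (Set.Ioc (0:ℝ) 1)) := by
    refine integrable_of_bound 2
      ((hsm_bn1.measurable.abs.add hsm_bp1.measurable.abs).aestronglyMeasurable) ?_
    refine Filter.Eventually.of_forall fun q => ?_
    have h1 := hb_bn1 q; have h3 := hb_bp1 q
    rw [abs_of_nonneg (by positivity)]; linarith
  have hs2 : Integrable (fun q => |binNeg μ2 q| + |binPos μ2 q|)
      (volume.restrict (Set.Ioc (0:ℝ) 1)) := by
    refine integrable_of_bound 2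
      ((hsm_bn2.measurable.abs.add hsm_bp2.measurable.abs).aestronglyMeasurable) ?_
    refine Filter.Eventually.of_forall fun q => ?_
    have h2 := hb_bn2 q; have h4 := hb_bp2 q
    rw [abs_of_nonneg (by positivity)]; linarith
  have hl1 : |l1ATB μ1 - l1ATB μ2| ≤ 3 * Δ := by
    have e : l1ATB μ1 - l1ATB μ2 = ∫ q in Set.Ioc (0:ℝ) 1,
        ((|binNeg μ1 q| + |binPos μ1 q|) - (|binNeg μ2 q| + |binPos μ2 q|)) := by
      rw [l1ATB, l1ATB, intervalIntegral.integral_of_le zero_le_one,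
        intervalIntegral.integral_of_le zero_le_one, ← integral_sub hs1 hs2]
    rw [e]
    calc |∫ q in Set.Ioc (0:ℝ) 1,
          ((|binNeg μ1 q| + |binPos μ1 q|) - (|binNeg μ2 q| + |binPos μ2 q|))|
        ≤ ∫ q in Set.Ioc (0:ℝ) 1,
          |(|binNeg μ1 q| + |binPos μ1 q|) - (|binNeg μ2 q| + |binPos μ2 q|)| := by
          simpa [Real.norm_eq_abs] using norm_integral_le_integral_norm
            (μ := volume.restrict (Set.Ioc (0:ℝ) 1))
            (fun q => (|binNeg μ1 q| + |binPos μ1 q|) - (|binNeg μ2 q| + |binPos μ2 q|))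
      _ ≤ ∫ q in Set.Ioc (0:ℝ) 1,
          (|binNeg μ1 q - binNeg μ2 q| + |binPos μ1 q - binPos μ2 q|) := by
          refine integral_mono_ae (hs1.sub hs2).abs hIbq
            (Filter.Eventually.of_forall fun q => ?_)
          have t1 : |(|binNeg μ1 q| - |binNeg μ2 q|)| ≤ |binNeg μ1 q - binNeg μ2 q| :=
            abs_abs_sub_abs_le_abs_sub _ _
          have t2 : |(|binPos μ1 q| - |binPos μ2 q|)| ≤ |binPos μ1 q - binPos μ2 q| :=
            abs_abs_sub_abs_le_abs_sub _ _
          dsimp only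
          have e' : (|binNeg μ1 q| + |binPos μ1 q|) - (|binNeg μ2 q| + |binPos μ2 q|)
              = (|binNeg μ1 q| - |binNeg μ2 q|) + (|binPos μ1 q| - |binPos μ2 q|) := by ring
          rw [e']
          exact (abs_add_le _ _).trans (by linarith)
      _ ≤ 3 * Δ := core2
  -- ATB part
  have hT1 : Integrable (fun q => (binNeg μ1 q)^2 + (binPos μ1 q)^2)
      (volume.restrict (Set.Ioc (0:ℝ) 1)) := by
    refine integrable_of_bound 2
      (((hsm_bn1.measurable.pow_const 2).add
        (hsm_bp1.measurable.pow_const 2)).aestronglyMeasurable) ?_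
    refine Filter.Eventually.of_forall fun q => ?_
    have h1 := hb_bn1 q; have h3 := hb_bp1 q
    have n1 := sq_abs (binNeg μ1 q); have n3 := sq_abs (binPos μ1 q)
    have : (binNeg μ1 q)^2 + (binPos μ1 q)^2 ≤ 2 := by nlinarith [abs_nonneg (binNeg μ1 q), abs_nonneg (binPos μ1 q), sq_abs (binNeg μ1 q), sq_abs (binPos μ1 q)]
    rw [abs_of_nonneg (by positivity)]; linarith
  have hT2 : Integrable (fun q => (binNeg μ2 q)^2 + (binPos μ2 q)^2)
      (volume.restrict (Set.Ioc (0:ℝ) 1)) := by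
    refine integrable_of_bound 2
      (((hsm_bn2.measurable.pow_const 2).add
        (hsm_bp2.measurable.pow_const 2)).aestronglyMeasurable) ?_
    refine Filter.Eventually.of_forall fun q => ?_
    have h2 := hb_bn2 q; have h4 := hb_bp2 q
    have : (binNeg μ2 q)^2 + (binPos μ2 q)^2 ≤ 2 := by nlinarith [abs_nonneg (binNeg μ2 q), abs_nonneg (binPos μ2 q), sq_abs (binNeg μ2 q), sq_abs (binPos μ2 q)]
    rw [abs_of_nonneg (by positivity)]; linarith
  have hatb : |ATB μ1 - ATB μ2| ≤ 6 * Δ := by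
    have e : ATB μ1 - ATB μ2 = ∫ q in Set.Ioc (0:ℝ) 1,
        (((binNeg μ1 q)^2 + (binPos μ1 q)^2) - ((binNeg μ2 q)^2 + (binPos μ2 q)^2)) := by
      rw [ATB, ATB, intervalIntegral.integral_of_le zero_le_one,
        intervalIntegral.integral_of_le zero_le_one, ← integral_sub hT1 hT2]
    rw [e]
    have h2bq : Integrable (fun q => 2 * (|binNeg μ1 q - binNeg μ2 q|
        + |binPos μ1 q - binPos μ2 q|)) (volume.restrict (Set.Ioc (0:ℝ) 1)) :=
      hIbq.const_mul 2
    calc |∫ q in Set.Ioc (0:ℝ) 1,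
          (((binNeg μ1 q)^2 + (binPos μ1 q)^2) - ((binNeg μ2 q)^2 + (binPos μ2 q)^2))|
        ≤ ∫ q in Set.Ioc (0:ℝ) 1,
          |((binNeg μ1 q)^2 + (binPos μ1 q)^2) - ((binNeg μ2 q)^2 + (binPos μ2 q)^2)| := by
          simpa [Real.norm_eq_abs] using norm_integral_le_integral_norm
            (μ := volume.restrict (Set.Ioc (0:ℝ) 1))
            (fun q => ((binNeg μ1 q)^2 + (binPos μ1 q)^2)
              - ((binNeg μ2 q)^2 + (binPos μ2 q)^2))
      _ ≤ ∫ q in Set.Ioc (0:ℝ) 1, 2 * (|binNeg μ1 q - binNeg μ2 q|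
            + |binPos μ1 q - binPos μ2 q|) := by
          refine integral_mono_ae (hT1.sub hT2).abs h2bq
            (Filter.Eventually.of_forall fun q => ?_)
          have t1 := sq_diff_bound (binNeg μ1 q) (binNeg μ2 q) (hb_bn1 q) (hb_bn2 q)
          have t2 := sq_diff_bound (binPos μ1 q) (binPos μ2 q) (hb_bp1 q) (hb_bp2 q)
          dsimp only
          have e' : ((binNeg μ1 q)^2 + (binPos μ1 q)^2) - ((binNeg μ2 q)^2 + (binPos μ2 q)^2)
              = ((binNeg μ1 q)^2 - (binNeg μ2 q)^2) + ((binPos μ1 q)^2 - (binPos μ2 q)^2) := by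
            ring
          rw [e']
          exact (abs_add_le _ _).trans (by linarith)
      _ = 2 * ∫ q in Set.Ioc (0:ℝ) 1, (|binNeg μ1 q - binNeg μ2 q|
            + |binPos μ1 q - binPos μ2 q|) := integral_const_mul 2 _
      _ ≤ 6 * Δ := by linarith
  exact ⟨hl1, hatb⟩

end
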